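/- Let V be a free module over ℤ[Γ] for a totally ordered abelian group Γ (ordering compatible with the group structure), with basis {t_i | i ∈ I} indexed by a partially ordered set I in which every downward interval is finite. Let bar : V → V be an additive involution-compatible map satisfying bar(a·v) = ā·bar(v) for a ∈ ℤ[Γ] (where ā inverts group elements) and bar(t_i) = Σ_j a_{ij} t_j with a_{ii} = 1 and a_{ij} ≠ 0 only if j ≤ i, and assume bar is an involution. Then for each i ∈ I there is a unique element b_i ∈ V with bar(b_i) = b_i and b_i = Σ_{j ≤ i} h_{ij} t_j, where h_{ii} = 1 and h_{ij} ∈ ℤ[Γ_+] for j < i (Γ_+ the strictly positive elements); moreover {b_i} is a basis of V. -/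

import Mathlib

noncomputable section

open MonoidAlgebra

set_option linter.unusedSectionVars false
set_option maxHeartbeats 1000000

section LusztigAux

variable {Γ : Type*} [CommGroup Γ] [LinearOrder Γ] [CovariantClass Γ Γ (· * ·) (· < ·)]

lemma barR_apply (barR : MonoidAlgebra ℤ Γ →+* MonoidAlgebra ℤ Γ)
    (hbarR : ∀ γ : Γ, barR (MonoidAlgebra.of ℤ Γ γ) = MonoidAlgebra.of ℤ Γ γ⁻¹)
    (f : MonoidAlgebra ℤ Γ) (δ : Γ) : (barR f).coeff δ = f.coeff δ⁻¹ := by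
  induction f using MonoidAlgebra.induction_linear with
  | zero => simp
  | add f g hf hg => rw [map_add, MonoidAlgebra.coeff_add, MonoidAlgebra.coeff_add,
      Finsupp.add_apply, Finsupp.add_apply, hf, hg]
  | single γ n =>
    have : (MonoidAlgebra.single γ n : MonoidAlgebra ℤ Γ) = n • MonoidAlgebra.of ℤ Γ γ := by
      simp [MonoidAlgebra.of_apply, MonoidAlgebra.smul_single]
    rw [this, map_zsmul, hbarR]
    simp [MonoidAlgebra.of_apply, Finsupp.single_apply, inv_eq_iff_eq_inv]


def LPos (f : MonoidAlgebra ℤ Γ) : Prop := ∀ γ ∈ f.coeff.support, (1:Γ) < γ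

lemma lpos_iff {f : MonoidAlgebra ℤ Γ} : LPos f ↔ ∀ γ : Γ, f.coeff γ ≠ 0 → 1 < γ := by
  unfold LPos; simp [Finsupp.mem_support_iff]

lemma LPos.add {f g : MonoidAlgebra ℤ Γ} (hf : LPos f) (hg : LPos g) : LPos (f + g) := by
  intro γ hγ
  rw [MonoidAlgebra.coeff_add] at hγ
  rcases Finset.mem_union.mp (Finsupp.support_add hγ) with h | h
  · exact hf γ h
  · exact hg γ h

lemma LPos.zero : LPos (0 : MonoidAlgebra ℤ Γ) := by intro γ hγ; simp at hγ

lemma LPos.mul {f g : MonoidAlgebra ℤ Γ} (hf : LPos f) (hg : LPos g) : LPos (f * g) := by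
  classical
  intro γ hγ
  obtain ⟨a, ha, b, hb, rfl⟩ := Finset.mem_mul.mp (MonoidAlgebra.support_coeff_mul_subset f g hγ)
  haveI : MulLeftMono Γ := covariantClass_le_of_lt Γ Γ _
  exact Left.one_lt_mul' (hf a ha) (hg b hb)

noncomputable def pp (f : MonoidAlgebra ℤ Γ) : MonoidAlgebra ℤ Γ :=
  MonoidAlgebra.ofCoeff (@Finsupp.filter Γ ℤ _ (fun γ => 1 < γ) (Classical.decPred _) f.coeff)

lemma pp_apply (f : MonoidAlgebra ℤ Γ) (γ : Γ) : (pp f).coeff γ = if 1 < γ then f.coeff γ else 0 := by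
  classical
  simp [pp, MonoidAlgebra.coeff_ofCoeff, Finsupp.filter_apply]

lemma lpos_pp (f : MonoidAlgebra ℤ Γ) : LPos (pp f) := by
  rw [lpos_iff]
  intro γ h
  rw [pp_apply] at h
  by_contra hc
  rw [if_neg hc] at h
  exact h rfl

lemma pp_sub (barR : MonoidAlgebra ℤ Γ →+* MonoidAlgebra ℤ Γ)
    (hap : ∀ (f : MonoidAlgebra ℤ Γ) (δ : Γ), (barR f).coeff δ = f.coeff δ⁻¹)
    {f : MonoidAlgebra ℤ Γ} (hf : barR f = -f) :
    pp f - barR (pp f) = f := by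
  have key : ∀ δ : Γ, f.coeff δ⁻¹ = -f.coeff δ := by
    intro δ
    rw [← hap f δ, hf, MonoidAlgebra.coeff_neg, Finsupp.neg_apply]
  ext δ
  rw [MonoidAlgebra.coeff_sub, Finsupp.sub_apply, hap, pp_apply, pp_apply]
  rcases lt_trichotomy 1 δ with h | h | h
  · rw [if_pos h, if_neg (not_lt.mpr (inv_lt_one'.mpr h).le)]
    · ring
  · subst h
    have h1 : f.coeff (1:Γ) = 0 := by
      have := key 1
      rw [inv_one] at this
      omega
    simp [h1]
  · rw [if_neg (not_lt.mpr h.le), if_pos (one_lt_inv'.mpr h)]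
    rw [key]
    ring


lemma LPos.neg {f : MonoidAlgebra ℤ Γ} (hf : LPos f) : LPos (-f) := by
  intro γ hγ
  rw [MonoidAlgebra.coeff_neg, Finsupp.support_neg] at hγ
  exact hf γ hγ

lemma LPos.sub {f g : MonoidAlgebra ℤ Γ} (hf : LPos f) (hg : LPos g) : LPos (f - g) := by
  rw [sub_eq_add_neg]
  exact hf.add hg.neg

lemma finset_exists_maximal_old {α : Type*} [Preorder α] (s : Finset α) (h : s.Nonempty) :
    ∃ m ∈ s, ∀ x ∈ s, ¬ m < x := by
  obtain ⟨m, hm⟩ := s.exists_maximal h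
  exact ⟨m, hm.1, fun x hx hlt => hlt.not_ge (hm.2 hx hlt.le)⟩

variable {I : Type*} [PartialOrder I] {V : Type*} [AddCommGroup V]
  [Module (MonoidAlgebra ℤ Γ) V] (t : Module.Basis I (MonoidAlgebra ℤ Γ) V)

lemma repr_sum (s : Finset I) (r : I → MonoidAlgebra ℤ Γ) (c : I → V) (k : I) :
    t.repr (∑ j ∈ s, r j • c j) k = ∑ j ∈ s, r j * t.repr (c j) k := by
  rw [map_sum, Finsupp.finset_sum_apply]
  refine Finset.sum_congr rfl fun j _ => ?_
  rw [map_smul, Finsupp.smul_apply, smul_eq_mul]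

lemma tri_indep (s : Finset I) (c : I → V)
    (hd : ∀ j ∈ s, t.repr (c j) j = 1)
    (ht : ∀ j ∈ s, ∀ k, t.repr (c j) k ≠ 0 → k ≤ j)
    (r : I → MonoidAlgebra ℤ Γ) (h : ∑ j ∈ s, r j • c j = 0) :
    ∀ j ∈ s, r j = 0 := by
  classical
  by_contra hc
  push_neg at hc
  obtain ⟨j0, hj0s, hj0⟩ := hc
  have hne : (s.filter (fun j => r j ≠ 0)).Nonempty := ⟨j0, Finset.mem_filter.mpr ⟨hj0s, hj0⟩⟩
  obtain ⟨m, hm, hmax⟩ := finset_exists_maximal_old _ hne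
  rw [Finset.mem_filter] at hm
  have h0 : t.repr (∑ j ∈ s, r j • c j) m = 0 := by rw [h]; simp
  rw [repr_sum] at h0
  rw [Finset.sum_eq_single m (fun k hk hkm => ?_) (fun h' => absurd hm.1 h')] at h0
  · rw [hd m hm.1] at h0
    exact hm.2 (by simpa using h0)
  · by_cases hrk : r k = 0
    · rw [hrk, zero_mul]
    · by_cases hck : t.repr (c k) m = 0
      · rw [hck, mul_zero]
      · have hmk : m ≤ k := ht k hk m hck
        have : m < k := lt_of_le_of_ne hmk (Ne.symm hkm)
        exact absurd this (hmax k (Finset.mem_filter.mpr ⟨hk, hrk⟩))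

lemma tri_span : ∀ (n : ℕ) (s : Finset I), s.card ≤ n →
    (∀ j ∈ s, ∀ k, k ≤ j → k ∈ s) →
    ∀ (c : I → V), (∀ j ∈ s, t.repr (c j) j = 1) →
    (∀ j ∈ s, ∀ k, t.repr (c j) k ≠ 0 → k ≤ j) →
    ∀ w : V, (∀ k, t.repr w k ≠ 0 → k ∈ s) →
    ∃ r : I → MonoidAlgebra ℤ Γ, w = ∑ j ∈ s, r j • c j := by
  classical
  intro n
  induction n with
  | zero =>
    intro s hcard _ c _ _ w hw
    have hs : s = ∅ := Finset.card_eq_zero.mp (Nat.le_zero.mp hcard)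
    subst hs
    refine ⟨0, ?_⟩
    have : t.repr w = 0 := by
      refine Finsupp.ext fun k => ?_
      by_contra hk
      exact absurd (hw k hk) (by simp)
    have hw0 : w = 0 := by simpa using congrArg t.repr.symm this
    simp [hw0]
  | succ n IH =>
    intro s hcard hdc c hd ht w hw
    rcases Finset.eq_empty_or_nonempty s with rfl | hne
    · refine ⟨0, ?_⟩
      have : t.repr w = 0 := by
        refine Finsupp.ext fun k => ?_
        by_contra hk; exact absurd (hw k hk) (by simp)
      have hw0 : w = 0 := by simpa using congrArg t.repr.symm this
      simp [hw0]
    · obtain ⟨m, hms, hmax⟩ := finset_exists_maximal_old s hne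
      set w' := w - t.repr w m • c m with hw'
      have hsupp : ∀ k, t.repr w' k ≠ 0 → k ∈ s.erase m := by
        intro k hk
        rw [hw', map_sub, map_smul, Finsupp.sub_apply, Finsupp.smul_apply, smul_eq_mul] at hk
        rcases eq_or_ne k m with hkm | hkm
        · rw [hkm, hd m hms, mul_one, sub_self] at hk
          exact absurd rfl hk
        · refine Finset.mem_erase.mpr ⟨hkm, ?_⟩
          by_cases h1 : t.repr w k ≠ 0
          · exact hw k h1
          · push_neg at h1
            rw [h1, zero_sub, neg_ne_zero] at hk
            have : t.repr (c m) k ≠ 0 := fun h => hk (by rw [h, mul_zero])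
            exact hdc m hms k (ht m hms k this)
      have herase_dc : ∀ j ∈ s.erase m, ∀ k, k ≤ j → k ∈ s.erase m := by
        intro j hj k hkj
        rw [Finset.mem_erase] at hj ⊢
        refine ⟨?_, hdc j hj.2 k hkj⟩
        rintro rfl
        exact absurd (lt_of_le_of_ne hkj (fun h => hj.1 h.symm)) (hmax j hj.2)
      have hcard' : (s.erase m).card ≤ n := by
        have := Finset.card_erase_of_mem hms
        omega
      obtain ⟨r', hr'⟩ := IH (s.erase m) hcard' herase_dc c
        (fun j hj => hd j (Finset.mem_of_mem_erase hj))
        (fun j hj => ht j (Finset.mem_of_mem_erase hj)) w' hsupp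
      classical
      refine ⟨Function.update r' m (t.repr w m), ?_⟩
      rw [← Finset.sum_erase_add s _ hms, Function.update_self]
      have : ∑ j ∈ s.erase m, Function.update r' m (t.repr w m) j • c j
          = ∑ j ∈ s.erase m, r' j • c j := by
        refine Finset.sum_congr rfl fun j hj => ?_
        rw [Function.update_of_ne (Finset.ne_of_mem_erase hj)]
      rw [this, ← hr', hw']
      abel


/-- the defining property of `b i` -/
def GoodAt (t : Module.Basis I (MonoidAlgebra ℤ Γ) V) (bar : V → V) (i : I) (v : V) : Prop :=
  bar v = v ∧ t.repr v i = 1 ∧ (∀ j : I, t.repr v j ≠ 0 → j ≤ i) ∧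
    (∀ j : I, j < i → LPos (t.repr v j))

lemma exists_b (hfin : ∀ i : I, {j | j ≤ i}.Finite)
    (t : Module.Basis I (MonoidAlgebra ℤ Γ) V)
    (barR : MonoidAlgebra ℤ Γ →+* MonoidAlgebra ℤ Γ)
    (hap : ∀ (f : MonoidAlgebra ℤ Γ) (δ : Γ), (barR f).coeff δ = f.coeff δ⁻¹)
    (bar : V → V)
    (hadd : ∀ x y : V, bar (x + y) = bar x + bar y)
    (hsmul : ∀ (a : MonoidAlgebra ℤ Γ) (v : V), bar (a • v) = barR a • bar v)
    (hinv : ∀ v : V, bar (bar v) = v)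
    (hdiag : ∀ i : I, t.repr (bar (t i)) i = 1)
    (htri : ∀ i j : I, t.repr (bar (t i)) j ≠ 0 → j ≤ i) :
    ∀ (n : ℕ) (i : I), (hfin i).toFinset.card ≤ n → ∃ v, GoodAt t bar i v := by
  classical
  let barH : V →+ V := AddMonoidHom.mk' bar hadd
  have hbarH : ∀ x, barH x = bar x := fun _ => rfl
  intro n
  induction n with
  | zero =>
    intro i hcard
    exact absurd hcard (by
      simp only [not_le, Nat.pos_iff_ne_zero]  -- card > 0
      intro h
      have : i ∈ (hfin i).toFinset := by simp
      simp [Finset.card_eq_zero.mp h] at this)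
  | succ n IH =>
    intro i hcard
    set s : Finset I := (hfin i).toFinset.erase i with hs
    have hmem_s : ∀ j, j ∈ s ↔ j < i := by
      intro j
      rw [hs, Finset.mem_erase, Set.Finite.mem_toFinset]
      constructor
      · rintro ⟨h1, h2⟩; exact lt_of_le_of_ne h2 h1
      · intro h; exact ⟨ne_of_lt h, le_of_lt h⟩
    have hcards : s.card ≤ n := by
      have h1 : s.card = (hfin i).toFinset.card - 1 :=
        Finset.card_erase_of_mem (by simp)
      omega
    -- choose b_j for j < i
    have hIH : ∀ j, j < i → ∃ v, GoodAt t bar j v := by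
      intro j hj
      refine IH j ?_
      calc (hfin j).toFinset.card ≤ s.card := Finset.card_le_card ?_
        _ ≤ n := hcards
      intro k hk
      rw [Set.Finite.mem_toFinset] at hk
      exact (hmem_s k).mpr (lt_of_le_of_lt hk hj)
    choose c0 hc0 using hIH
    set c : I → V := fun j => if h : j < i then c0 j h else t j with hc
    have hcP : ∀ j ∈ s, GoodAt t bar j (c j) := by
      intro j hj
      rw [hc]
      simp only
      rw [dif_pos ((hmem_s j).mp hj)]
      exact hc0 j _
    have hcd : ∀ j ∈ s, t.repr (c j) j = 1 := fun j hj => (hcP j hj).2.1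
    have hct : ∀ j ∈ s, ∀ k, t.repr (c j) k ≠ 0 → k ≤ j := fun j hj => (hcP j hj).2.2.1
    -- w := bar t_i - t_i
    set w : V := bar (t i) - t i with hw
    have hwsupp : ∀ k, t.repr w k ≠ 0 → k ∈ s := by
      intro k hk
      rw [hw, map_sub, Finsupp.sub_apply] at hk
      rw [hmem_s]
      rcases eq_or_ne k i with rfl | hki
      · rw [hdiag, t.repr_self, Finsupp.single_eq_same, sub_self] at hk
        exact absurd rfl hk
      · refine lt_of_le_of_ne ?_ hki
        refine htri i k fun h => hk ?_
        rw [h, t.repr_self, Finsupp.single_eq_of_ne hki, sub_zero]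
    have hsdc : ∀ j ∈ s, ∀ k, k ≤ j → k ∈ s := by
      intro j hj k hkj
      exact (hmem_s k).mpr (lt_of_le_of_lt hkj ((hmem_s j).mp hj))
    obtain ⟨r, hr⟩ := tri_span t s.card s le_rfl hsdc c hcd hct w hwsupp
    -- bar w = -w
    have hbarw : bar w = -w := by
      rw [hw, show bar (bar (t i) - t i) = barH (bar (t i) - t i) from rfl, map_sub,
        hbarH, hbarH, hinv]
      abel
    -- bar w = ∑ barR (r j) • c j
    have hbarw2 : bar w = ∑ j ∈ s, barR (r j) • c j := by
      conv_lhs => rw [← hbarH, hr, map_sum]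
      refine Finset.sum_congr rfl fun j hj => ?_
      rw [hbarH, hsmul, (hcP j hj).1]
    have hzero : ∑ j ∈ s, (barR (r j) + r j) • c j = 0 := by
      have : ∑ j ∈ s, (barR (r j) + r j) • c j
          = ∑ j ∈ s, barR (r j) • c j + ∑ j ∈ s, r j • c j := by
        rw [← Finset.sum_add_distrib]
        exact Finset.sum_congr rfl fun j _ => add_smul _ _ _
      rw [this, ← hbarw2, ← hr, hbarw]
      abel
    have hanti : ∀ j ∈ s, barR (r j) = - r j := by
      intro j hj
      have := tri_indep t s c hcd hct _ hzero j hj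
      exact eq_neg_of_add_eq_zero_left this
    have hppsub : ∀ j ∈ s, pp (r j) - barR (pp (r j)) = r j :=
      fun j hj => pp_sub barR hap (hanti j hj)
    -- the candidate
    refine ⟨t i + ∑ j ∈ s, pp (r j) • c j, ?_, ?_, ?_, ?_⟩
    · -- bar-invariance
      have h1 : bar (t i + ∑ j ∈ s, pp (r j) • c j)
          = bar (t i) + ∑ j ∈ s, barR (pp (r j)) • c j := by
        rw [← hbarH, map_add, map_sum, hbarH]
        congr 1
        refine Finset.sum_congr rfl fun j hj => ?_
        rw [hbarH, hsmul, (hcP j hj).1]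
      rw [h1]
      have h2 : bar (t i) = t i + w := by rw [hw]; abel
      have h3 : (∑ j ∈ s, pp (r j) • c j) - ∑ j ∈ s, barR (pp (r j)) • c j = w := by
        rw [← Finset.sum_sub_distrib]
        rw [hr]
        refine Finset.sum_congr rfl fun j hj => ?_
        rw [← sub_smul, hppsub j hj]
      rw [h2]
      have := h3
      rw [sub_eq_iff_eq_add] at this
      rw [this]
      abel
    · -- diagonal coefficient
      rw [map_add, Finsupp.add_apply, t.repr_self, Finsupp.single_eq_same, repr_sum t]
      have : ∑ j ∈ s, pp (r j) * t.repr (c j) i = 0 := by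
        refine Finset.sum_eq_zero fun j hj => ?_
        have : t.repr (c j) i = 0 := by
          by_contra hcon
          exact absurd (hct j hj i hcon) (not_le_of_gt ((hmem_s j).mp hj))
        rw [this, mul_zero]
      rw [this, add_zero]
    · -- triangularity
      intro k hk
      rw [map_add, Finsupp.add_apply, t.repr_self, repr_sum t] at hk
      rcases eq_or_ne k i with rfl | hki
      · exact le_refl _
      · rw [Finsupp.single_eq_of_ne hki, zero_add] at hk
        obtain ⟨j, hj, hterm⟩ := Finset.exists_ne_zero_of_sum_ne_zero hk
        have : t.repr (c j) k ≠ 0 := fun h => hterm (by rw [h, mul_zero])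
        exact le_of_lt (lt_of_le_of_lt (hct j hj k this) ((hmem_s j).mp hj))
    · -- positivity
      intro k hki
      rw [lpos_iff]
      intro γ hγ
      rw [map_add, Finsupp.add_apply, t.repr_self,
        Finsupp.single_eq_of_ne (ne_of_lt hki), zero_add, repr_sum t] at hγ
      have hLP : LPos (∑ j ∈ s, pp (r j) * t.repr (c j) k) := by
        refine Finset.sum_induction _ LPos (fun a b => LPos.add) LPos.zero fun j hj => ?_
        rcases eq_or_ne k j with hkj | hkj
        · rw [hkj, hcd j hj, mul_one]
          exact lpos_pp _
        · by_cases hcjk : t.repr (c j) k = 0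
          · rw [hcjk, mul_zero]
            exact LPos.zero
          · have hklt : k < j := lt_of_le_of_ne (hct j hj k hcjk) hkj
            exact LPos.mul (lpos_pp _) ((hcP j hj).2.2.2 k hklt)
      exact lpos_iff.mp hLP γ hγ

lemma uniq (t : Module.Basis I (MonoidAlgebra ℤ Γ) V)
    (barR : MonoidAlgebra ℤ Γ →+* MonoidAlgebra ℤ Γ)
    (hap : ∀ (f : MonoidAlgebra ℤ Γ) (δ : Γ), (barR f).coeff δ = f.coeff δ⁻¹)
    (bar : V → V)
    (hadd : ∀ x y : V, bar (x + y) = bar x + bar y)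
    (hsmul : ∀ (a : MonoidAlgebra ℤ Γ) (v : V), bar (a • v) = barR a • bar v)
    (hdiag : ∀ i : I, t.repr (bar (t i)) i = 1)
    (htri : ∀ i j : I, t.repr (bar (t i)) j ≠ 0 → j ≤ i)
    (i : I) (v w : V)
    (hv : bar v = v) (hv1 : t.repr v i = 1) (hv2 : ∀ j, t.repr v j ≠ 0 → j ≤ i)
    (hv3 : ∀ j, j < i → LPos (t.repr v j))
    (hw : bar w = w) (hw1 : t.repr w i = 1) (hw2 : ∀ j, t.repr w j ≠ 0 → j ≤ i)
    (hw3 : ∀ j, j < i → LPos (t.repr w j)) : v = w := by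
  classical
  let barH : V →+ V := AddMonoidHom.mk' bar hadd
  have hbarH : ∀ x, barH x = bar x := fun _ => rfl
  by_contra hne
  have hd0 : t.repr (v - w) ≠ 0 := by
    intro h
    apply hne
    have : v - w = 0 := by simpa using congrArg t.repr.symm h
    exact sub_eq_zero.mp this
  obtain ⟨j, hjS, hjmax⟩ := finset_exists_maximal_old _ (Finsupp.support_nonempty_iff.mpr hd0)
  have hdsum : v - w = ∑ k ∈ (t.repr (v - w)).support, t.repr (v - w) k • t k := by
    conv_lhs => rw [← t.linearCombination_repr (v - w)]
    rw [Finsupp.linearCombination_apply, Finsupp.sum]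
  have hbar_eq : bar (v - w) = v - w := by
    rw [show bar (v - w) = barH (v - w) from rfl, map_sub, hbarH, hbarH, hv, hw]
  have e1 : bar (v - w) = ∑ k ∈ (t.repr (v - w)).support,
      barR (t.repr (v - w) k) • bar (t k) := by
    conv_lhs => rw [← hbarH, hdsum, map_sum]
    exact Finset.sum_congr rfl fun k _ => by rw [hbarH, hsmul]
  have key : t.repr (v - w) j = barR (t.repr (v - w) j) := by
    conv_lhs => rw [← hbar_eq]
    rw [e1, repr_sum t]
    rw [Finset.sum_eq_single j (fun k hk hkj => ?_) (fun h' => absurd hjS h')]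
    · rw [hdiag j, mul_one]
    · by_cases hc : t.repr (bar (t k)) j = 0
      · rw [hc, mul_zero]
      · have hjk : j ≤ k := htri k j hc
        exact absurd (lt_of_le_of_ne hjk (Ne.symm hkj)) (hjmax k hk)
  -- j < i
  have hji : j < i := by
    have hjne : t.repr (v - w) j ≠ 0 := Finsupp.mem_support_iff.mp hjS
    have hji' : j ≤ i := by
      rw [map_sub, Finsupp.sub_apply] at hjne
      by_cases h1 : t.repr v j ≠ 0
      · exact hv2 j h1
      · push_neg at h1
        rw [h1, zero_sub, neg_ne_zero] at hjne
        exact hw2 j hjne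
    refine lt_of_le_of_ne hji' fun h => ?_
    apply Finsupp.mem_support_iff.mp hjS
    rw [h, map_sub, Finsupp.sub_apply, hv1, hw1, sub_self]
  have hpos : LPos (t.repr (v - w) j) := by
    rw [map_sub, Finsupp.sub_apply]
    exact LPos.sub (hv3 j hji) (hw3 j hji)
  obtain ⟨γ, hγ⟩ := Finsupp.support_nonempty_iff.mpr (fun h : (t.repr (v - w) j).coeff = 0 => Finsupp.mem_support_iff.mp hjS
    (MonoidAlgebra.coeff_inj.mp (by rw [h, MonoidAlgebra.coeff_zero])))
  have h1γ : (1:Γ) < γ := lpos_iff.mp hpos γ (Finsupp.mem_support_iff.mp hγ)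
  have : (t.repr (v - w) j).coeff γ⁻¹ ≠ 0 := by
    rw [← hap, ← key]
    exact Finsupp.mem_support_iff.mp hγ
  have h1γi : (1:Γ) < γ⁻¹ := lpos_iff.mp hpos γ⁻¹ this
  exact absurd h1γi (not_lt.mpr (inv_lt_one'.mpr h1γ).le)

lemma basis_exists (hfin : ∀ i : I, {j | j ≤ i}.Finite)
    (t : Module.Basis I (MonoidAlgebra ℤ Γ) V) (b : I → V)
    (hd : ∀ i, t.repr (b i) i = 1)
    (ht : ∀ i k, t.repr (b i) k ≠ 0 → k ≤ i) :
    ∃ C : Module.Basis I (MonoidAlgebra ℤ Γ) V, ∀ i, C i = b i := by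
  classical
  have hli : LinearIndependent (MonoidAlgebra ℤ Γ) b := by
    rw [linearIndependent_iff]
    intro l hl
    have hsum : ∑ j ∈ l.support, l j • b j = 0 := by
      rw [← hl, Finsupp.linearCombination_apply, Finsupp.sum]
    have hz := tri_indep t l.support b (fun j _ => hd j) (fun j _ k => ht j k) l hsum
    refine Finsupp.ext fun j => ?_
    by_cases hj : j ∈ l.support
    · exact hz j hj
    · simpa [Finsupp.mem_support_iff, not_not] using hj
  have hsp : ∀ (n : ℕ) (i : I), (hfin i).toFinset.card ≤ n →
      t i ∈ Submodule.span (MonoidAlgebra ℤ Γ) (Set.range b) := by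
    intro n
    induction n with
    | zero =>
      intro i hcard
      exact absurd hcard (by
        simp only [not_le, Nat.pos_iff_ne_zero]
        intro h
        have : i ∈ (hfin i).toFinset := by simp
        simp [Finset.card_eq_zero.mp h] at this)
    | succ n IH =>
      intro i hcard
      set s : Finset I := (hfin i).toFinset.erase i with hs
      have hmem_s : ∀ j, j ∈ s ↔ j < i := by
        intro j
        rw [hs, Finset.mem_erase, Set.Finite.mem_toFinset]
        constructor
        · rintro ⟨h1, h2⟩; exact lt_of_le_of_ne h2 h1
        · intro h; exact ⟨ne_of_lt h, le_of_lt h⟩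
      have hbi : b i = ∑ k ∈ (hfin i).toFinset, t.repr (b i) k • t k := by
        conv_lhs => rw [← t.linearCombination_repr (b i)]
        rw [Finsupp.linearCombination_apply, Finsupp.sum]
        refine Finset.sum_subset ?_ ?_
        · intro k hk
          rw [Finsupp.mem_support_iff] at hk
          rw [Set.Finite.mem_toFinset]
          exact ht i k hk
        · intro k _ hk
          rw [Finsupp.notMem_support_iff] at hk
          rw [hk, zero_smul]
      have hii : i ∈ (hfin i).toFinset := by simp
      rw [← Finset.add_sum_erase _ _ hii, hd i, one_smul, ← hs] at hbi
      have hti : t i = b i - ∑ k ∈ s, t.repr (b i) k • t k :=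
        (sub_eq_of_eq_add hbi).symm
      rw [hti]
      refine Submodule.sub_mem _ (Submodule.subset_span ⟨i, rfl⟩)
        (Submodule.sum_mem _ fun k hk => Submodule.smul_mem _ _ (IH k ?_))
      have hk' : k < i := (hmem_s k).mp hk
      calc (hfin k).toFinset.card ≤ s.card := Finset.card_le_card ?_
        _ ≤ n := by
          have := Finset.card_erase_of_mem hii
          rw [← hs] at this
          omega
      intro m hm
      rw [Set.Finite.mem_toFinset] at hm
      exact (hmem_s m).mpr (lt_of_le_of_lt hm hk')
  have hspan : ⊤ ≤ Submodule.span (MonoidAlgebra ℤ Γ) (Set.range b) := by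
    rw [← t.span_eq]
    refine Submodule.span_le.mpr ?_
    rintro x ⟨i, rfl⟩
    exact hsp (hfin i).toFinset.card i le_rfl
  exact ⟨Module.Basis.mk hli hspan, fun i => Module.Basis.mk_apply hli hspan i⟩

end LusztigAux

/-- Lusztig's elementary lemma.  Let Γ be a totally ordered abelian group (order
compatible with multiplication), R = ℤ[Γ] its group ring with bar-involution
induced by γ ↦ γ⁻¹, and V a free R-module with basis {t_i | i ∈ I} indexed by a
poset I with finite downward intervals.  If bar : V → V is additive, semilinear
(bar(a•v) = ā•bar(v)), an involution, and unitriangular with respect to the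
basis (bar(t_i) = Σ_{j ≤ i} a_{ij} t_j with a_{ii} = 1), then for each i there
is a unique bar-invariant b_i = Σ_{j ≤ i} h_{ij} t_j with h_{ii} = 1 and
h_{ij} ∈ ℤ[Γ₊] for j < i; moreover the b_i form a basis of V. -/
theorem lusztig_elementary_lemma
    {Γ : Type*} [CommGroup Γ] [LinearOrder Γ]
    [CovariantClass Γ Γ (· * ·) (· < ·)]
    {I : Type*} [PartialOrder I] (hfin : ∀ i : I, {j | j ≤ i}.Finite)
    {V : Type*} [AddCommGroup V] [Module (MonoidAlgebra ℤ Γ) V]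
    (t : Module.Basis I (MonoidAlgebra ℤ Γ) V)
    (barR : MonoidAlgebra ℤ Γ →+* MonoidAlgebra ℤ Γ)
    (hbarR : ∀ γ : Γ, barR (MonoidAlgebra.of ℤ Γ γ) = MonoidAlgebra.of ℤ Γ γ⁻¹)
    (bar : V → V)
    (hadd : ∀ x y : V, bar (x + y) = bar x + bar y)
    (hsmul : ∀ (a : MonoidAlgebra ℤ Γ) (v : V), bar (a • v) = barR a • bar v)
    (hinv : ∀ v : V, bar (bar v) = v)
    (hdiag : ∀ i : I, t.repr (bar (t i)) i = 1)
    (htri : ∀ i j : I, t.repr (bar (t i)) j ≠ 0 → j ≤ i) :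
    ∃ b : I → V,
      (∀ i : I,
        bar (b i) = b i ∧
        t.repr (b i) i = 1 ∧
        (∀ j : I, t.repr (b i) j ≠ 0 → j ≤ i) ∧
        (∀ j : I, j < i → ∀ γ ∈ (t.repr (b i) j).coeff.support, 1 < γ)) ∧
      (∀ (i : I) (v : V),
        (bar v = v ∧
         t.repr v i = 1 ∧
         (∀ j : I, t.repr v j ≠ 0 → j ≤ i) ∧
         (∀ j : I, j < i → ∀ γ ∈ (t.repr v j).coeff.support, 1 < γ)) → v = b i) ∧
      ∃ C : Module.Basis I (MonoidAlgebra ℤ Γ) V, ∀ i : I, C i = b i := by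
  classical
  have hap : ∀ (f : MonoidAlgebra ℤ Γ) (δ : Γ), (barR f).coeff δ = f.coeff δ⁻¹ := barR_apply barR hbarR
  have hex : ∀ i : I, ∃ v, GoodAt t bar i v := fun i =>
    exists_b hfin t barR hap bar hadd hsmul hinv hdiag htri (hfin i).toFinset.card i le_rfl
  choose b hb using hex
  refine ⟨b, fun i => ⟨(hb i).1, (hb i).2.1, (hb i).2.2.1, fun j hj => (hb i).2.2.2 j hj⟩, ?_, ?_⟩
  · rintro i v ⟨h1, h2, h3, h4⟩
    exact uniq t barR hap bar hadd hsmul hdiag htri i v (b i) h1 h2 h3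
      (fun j hj => h4 j hj) (hb i).1 (hb i).2.1 (hb i).2.2.1 (hb i).2.2.2
  · exact basis_exists hfin t b (fun i => (hb i).2.1) (fun i k => (hb i).2.2.1 k)
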